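/- Let $V \subseteq W$ be vector spaces over a field of characteristic zero, and consider the Koszul-type complexes $\bigwedge^{n+1} V \xrightarrow{d_V} \bigwedge^n V \otimes V$ and $\bigwedge^{n+1} W \xrightarrow{d_W} \bigwedge^n W \otimes W$ with differentials $d(v_0 \wedge \cdots \wedge v_n) = \sum_i (-1)^i (v_0 \wedge \cdots \widehat{v_i} \cdots \wedge v_n) \otimes v_i$. If $x \in \bigwedge^n V \otimes V$ maps to an element of the image of $d_W$ inside $\bigwedge^n W \otimes W$, and $x$ lies in the kernel of the Koszul differential $\bigwedge^n V \otimes V \to \bigwedge^{n-1} V \otimes \bigwedge^2 V$ (so that $x$ defines a cohomology class), then the induced map on cohomology at the middle term is injective: $x$ already lies in the image of $d_V$. -/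

import Mathlib

set_option synthInstance.maxHeartbeats 1000000

open ExteriorAlgebra TensorProduct

variable {K V W : Type*} [Field K] [AddCommGroup V] [Module K V] [AddCommGroup W] [Module K W]

/-- The wedge `v₀ ∧ ⋯ ∧ v_{n-1}`, as an element of the `n`-th exterior power `⋀^n V`. -/
noncomputable def wedge (n : ℕ) (v : Fin n → V) : ⋀[K]^n V :=
  ⟨ιMulti K n v, ιMulti_range K n (Set.mem_range_self v)⟩

/-- The map `⋀^n V → ⋀^n W` on exterior powers induced by a linear map `f : V → W`. -/
noncomputable def exteriorPowerMap (n : ℕ) (f : V →ₗ[K] W) :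
    ⋀[K]^n V →ₗ[K] ⋀[K]^n W :=
  (ExteriorAlgebra.map f).toLinearMap.restrict (p := ⋀[K]^n V) (q := ⋀[K]^n W)
    (fun x hx => by
      have hle : Submodule.map (ExteriorAlgebra.map f).toLinearMap (⋀[K]^n V) ≤ ⋀[K]^n W := by
        show Submodule.map (ExteriorAlgebra.map f).toLinearMap
            ((LinearMap.range (ι K (M := V))) ^ n) ≤ (LinearMap.range (ι K (M := W))) ^ n
        rw [Submodule.map_pow]
        have h1 : Submodule.map (ExteriorAlgebra.map f).toLinearMap
            (LinearMap.range (ι K (M := V))) ≤ LinearMap.range (ι K (M := W)) := by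
          rw [ι_range_map_map]
          exact Submodule.map_le_iff_le_comap.2 (fun y _ => by simp)
        exact pow_le_pow_left' h1 n
      exact hle ⟨x, hx, rfl⟩)

section Aux

variable {U : Type*} [AddCommGroup U] [Module K U]

lemma exteriorPowerMap_coe {U U' : Type*} [AddCommGroup U] [Module K U]
    [AddCommGroup U'] [Module K U'] (n : ℕ) (f : U →ₗ[K] U') (x : ⋀[K]^n U) :
    (exteriorPowerMap n f x : ExteriorAlgebra K U') = ExteriorAlgebra.map f (x : ExteriorAlgebra K U) :=
  rfl

/-- Two linear maps on an exterior power agree if they agree on wedges. -/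
lemma exteriorPower_ext {n : ℕ} {N : Type*} [AddCommGroup N] [Module K N]
    {g h : (⋀[K]^n U) →ₗ[K] N}
    (H : ∀ v : Fin n → U, g (wedge n v) = h (wedge n v)) : g = h := by
  refine LinearMap.ext fun x => ?_
  obtain ⟨x, hx⟩ := x
  have hx' : x ∈ Submodule.span K (Set.range (ιMulti K n (M := U))) := by
    rwa [ιMulti_span_fixedDegree]
  refine Submodule.span_induction
    (p := fun x _ => ∀ hx : x ∈ ⋀[K]^n U, g ⟨x, hx⟩ = h ⟨x, hx⟩) ?_ ?_ ?_ ?_ hx' hx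
  · rintro _ ⟨v, rfl⟩ hmem
    exact H v
  · intro hmem
    have h0 : (⟨0, hmem⟩ : ⋀[K]^n U) = 0 := rfl
    rw [h0, map_zero, map_zero]
  · intro a b ha hb iha ihb hmem
    have ha' : a ∈ ⋀[K]^n U := by
      rw [← ιMulti_span_fixedDegree]; exact ha
    have hb' : b ∈ ⋀[K]^n U := by
      rw [← ιMulti_span_fixedDegree]; exact hb
    have hab : (⟨a + b, hmem⟩ : ⋀[K]^n U) = ⟨a, ha'⟩ + ⟨b, hb'⟩ := rfl
    rw [hab, map_add, map_add, iha ha', ihb hb']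
  · intro c a ha iha hmem
    have ha' : a ∈ ⋀[K]^n U := by
      rw [← ιMulti_span_fixedDegree]; exact ha
    have hca : (⟨c • a, hmem⟩ : ⋀[K]^n U) = c • ⟨a, ha'⟩ := rfl
    rw [hca, map_smul, map_smul, iha ha']

/-- Left multiplication by `ι v` as a bilinear map into the next exterior power. -/
noncomputable def lmulι (n : ℕ) : U →ₗ[K] (⋀[K]^n U) →ₗ[K] ⋀[K]^(n+1) U where
  toFun v :=
    { toFun := fun ω => ⟨ι K v * (ω : ExteriorAlgebra K U), by
        have h := Submodule.mul_mem_mul (LinearMap.mem_range_self (ι K (M := U)) v) ω.2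
        rwa [← pow_succ'] at h⟩
      map_add' := fun x y => Subtype.ext (by simp [mul_add])
      map_smul' := fun c x => Subtype.ext (by simp [mul_smul_comm]) }
  map_add' v w := LinearMap.ext fun ω => Subtype.ext (by simp [add_mul])
  map_smul' c v := LinearMap.ext fun ω => Subtype.ext (by simp [smul_mul_assoc])

/-- The wedge-multiplication retraction `⋀^n U ⊗ U → ⋀^(n+1) U`, `ω ⊗ v ↦ (ι v) * ω`. -/
noncomputable def phi (n : ℕ) : ((⋀[K]^n U) ⊗[K] U) →ₗ[K] ⋀[K]^(n+1) U :=
  TensorProduct.lift (lmulι n).flip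

lemma phi_tmul (n : ℕ) (ω : ⋀[K]^n U) (v : U) :
    (phi n (ω ⊗ₜ[K] v) : ExteriorAlgebra K U) = ι K v * (ω : ExteriorAlgebra K U) :=
  rfl

lemma ιMulti_cons (n : ℕ) (v : U) (w : Fin n → U) :
    ι K v * ιMulti K n w = ιMulti K (n+1) (Fin.cons v w) := by
  have hw : Matrix.vecTail (Fin.cons v w) = w := by
    funext i; simp [Matrix.vecTail]
  rw [ιMulti_succ_apply, Fin.cons_zero, hw]

lemma intUnits_smul_eq {x : ExteriorAlgebra K U} (k : ℕ) :
    (((-1 : ℤˣ) ^ k) • x) = ((-1 : K) ^ k) • x := by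
  rcases Nat.even_or_odd k with hk | hk
  · rw [hk.neg_one_pow, hk.neg_one_pow, one_smul, one_smul]
  · rw [hk.neg_one_pow, hk.neg_one_pow, Units.neg_smul, one_smul, neg_one_smul]

lemma ιMulti_cons_succAbove (n : ℕ) (v : Fin (n+1) → U) (i : Fin (n+1)) :
    ιMulti K (n+1) (Fin.cons (v i) (v ∘ i.succAbove)) =
      ((-1 : K) ^ (i : ℕ)) • ιMulti K (n+1) v := by
  have hfun : Fin.cons (v i) (v ∘ i.succAbove) = v ∘ ⇑(i.cycleRange)⁻¹ := by
    funext k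
    induction k using Fin.cases with
    | zero =>
      rw [Fin.cons_zero, Function.comp_apply, ← Fin.cycleRange_self i,
        Equiv.Perm.inv_def, Equiv.symm_apply_apply]
    | succ j =>
      rw [Fin.cons_succ, Function.comp_apply, Function.comp_apply,
        ← Fin.cycleRange_succAbove i j, Equiv.Perm.inv_def, Equiv.symm_apply_apply]
  rw [hfun]
  have hperm := (ιMulti K (n+1) (M := U)).map_perm v (i.cycleRange)⁻¹
  have h1 : ((-1 : ℤˣ))⁻¹ = -1 := by decide
  rw [hperm, map_inv, Fin.sign_cycleRange, ← inv_pow, h1, intUnits_smul_eq]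

lemma phi_wedge_tmul (n : ℕ) (w : Fin n → U) (v : U) :
    phi n ((wedge n w) ⊗ₜ[K] v) = wedge (n+1) (Fin.cons v w) :=
  Subtype.ext (ιMulti_cons n v w)

lemma exteriorPowerMap_wedge (n : ℕ) (f : V →ₗ[K] W) (v : Fin n → V) :
    exteriorPowerMap n f (wedge n v) = wedge n (f ∘ v) :=
  Subtype.ext (map_apply_ιMulti f v)

end Aux

/-- Let `V ⊆ W` (an injective linear map `f`) be vector spaces over a field of
characteristic zero, with the Koszul complexes
`⋀^(n+1) U → ⋀^n U ⊗ U → ⋀^(n-1) U ⊗ ⋀² U` (here `n = m+1 ≥ 1`).  If a Koszul cocycle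
`x ∈ ⋀^n V ⊗ V` (i.e. `x ∈ ker(⋀^n V ⊗ V → ⋀^(n-1) V ⊗ ⋀² V)`) maps, under the natural
inclusion, into the image of `d_W : ⋀^(n+1) W → ⋀^n W ⊗ W`, then `x` already lies in the image
of `d_V : ⋀^(n+1) V → ⋀^n V ⊗ V`; i.e. the induced map on middle Koszul cohomology is
injective. -/
theorem koszul_cohomology_map_injective [CharZero K] (m : ℕ)
    (f : V →ₗ[K] W) (hf : Function.Injective f)
    (dV : (⋀[K]^(m+2) V) →ₗ[K] (⋀[K]^(m+1) V) ⊗[K] V)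
    (dW : (⋀[K]^(m+2) W) →ₗ[K] (⋀[K]^(m+1) W) ⊗[K] W)
    (d2V : ((⋀[K]^(m+1) V) ⊗[K] V) →ₗ[K] (⋀[K]^m V) ⊗[K] (⋀[K]^2 V))
    (hdV : ∀ v : Fin (m + 2) → V,
      dV (wedge (m + 2) v) =
        ∑ i : Fin (m + 2), ((-1 : K) ^ (i : ℕ)) • ((wedge (m + 1) (v ∘ i.succAbove)) ⊗ₜ[K] v i))
    (hdW : ∀ v : Fin (m + 2) → W,
      dW (wedge (m + 2) v) =
        ∑ i : Fin (m + 2), ((-1 : K) ^ (i : ℕ)) • ((wedge (m + 1) (v ∘ i.succAbove)) ⊗ₜ[K] v i))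
    (hd2V : ∀ (w : Fin (m + 1) → V) (x : V),
      d2V ((wedge (m + 1) w) ⊗ₜ[K] x) =
        ∑ i : Fin (m + 1), ((-1 : K) ^ (i : ℕ)) •
          ((wedge m (w ∘ i.succAbove)) ⊗ₜ[K] (wedge 2 ![w i, x])))
    (x : (⋀[K]^(m+1) V) ⊗[K] V)
    (hcocycle : d2V x = 0)
    (hx : TensorProduct.map (exteriorPowerMap (m + 1) f) f x ∈ LinearMap.range dW) :
    x ∈ LinearMap.range dV := by
  obtain ⟨ω, hω⟩ := hx
  set F1 := exteriorPowerMap (K := K) (m+1) f with hF1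
  set F2 := exteriorPowerMap (K := K) (m+2) f with hF2
  -- Step 1 : `phi ∘ dW = (m+2) • id`
  have hφd : ∀ y : ⋀[K]^(m+2) W, phi (m+1) (dW y) = ((m+2 : ℕ) : K) • y := by
    have heq : (phi (m+1)).comp dW
        = ((m+2 : ℕ) : K) • (LinearMap.id (R := K) (M := ⋀[K]^(m+2) W)) := by
      apply exteriorPower_ext
      intro v
      rw [LinearMap.comp_apply, hdW v, map_sum, LinearMap.smul_apply, LinearMap.id_apply]
      have hterm : ∀ i : Fin (m+2),
          phi (m+1) (((-1 : K) ^ (i : ℕ)) • ((wedge (m+1) (v ∘ i.succAbove)) ⊗ₜ[K] v i))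
            = wedge (m+2) v := by
        intro i
        rw [map_smul]
        have hmid : phi (m+1) ((wedge (m+1) (v ∘ i.succAbove)) ⊗ₜ[K] v i)
            = ((-1 : K) ^ (i : ℕ)) • wedge (m+2) v := by
          apply Subtype.ext
          rw [phi_tmul]
          show ι K (v i) * ιMulti K (m+1) (v ∘ i.succAbove)
            = ((-1 : K) ^ (i : ℕ)) • ιMulti K (m+2) v
          rw [ιMulti_cons, ιMulti_cons_succAbove]
        rw [hmid, smul_smul, ← pow_add, Even.neg_one_pow ⟨(i : ℕ), rfl⟩, one_smul]
      rw [Finset.sum_congr rfl (fun i _ => hterm i), Finset.sum_const, Finset.card_univ,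
        Fintype.card_fin, Nat.cast_smul_eq_nsmul]
    intro y
    exact LinearMap.congr_fun heq y
  -- Step 2 : naturality of `phi`
  have hnat : ∀ z : (⋀[K]^(m+1) V) ⊗[K] V,
      F2 (phi (m+1) z) = phi (m+1) (TensorProduct.map F1 f z) := by
    have heq : F2.comp (phi (m+1)) = (phi (m+1)).comp (TensorProduct.map F1 f) := by
      apply TensorProduct.ext'
      intro ωv v
      apply Subtype.ext
      show (F2 (phi (m+1) (ωv ⊗ₜ[K] v)) : ExteriorAlgebra K W)
        = (phi (m+1) (TensorProduct.map F1 f (ωv ⊗ₜ[K] v)) : ExteriorAlgebra K W)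
      rw [TensorProduct.map_tmul, phi_tmul, exteriorPowerMap_coe, phi_tmul,
        exteriorPowerMap_coe, map_mul, map_apply_ι]
    intro z
    exact LinearMap.congr_fun heq z
  -- Step 3 : the differentials commute with the inclusion
  have hcomm : (TensorProduct.map F1 f).comp dV = dW.comp F2 := by
    refine exteriorPower_ext (n := m + 2) (U := V) (N := (⋀[K]^(m+1) W) ⊗[K] W) fun v => ?_
    rw [LinearMap.comp_apply, LinearMap.comp_apply, hF2, exteriorPowerMap_wedge,
      hdV v, hdW (f ∘ v), map_sum]
    refine Finset.sum_congr rfl fun i _ => ?_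
    rw [map_smul, TensorProduct.map_tmul, hF1, exteriorPowerMap_wedge]
    rfl
  -- Step 4 : injectivity of the inclusion of tensor products
  have hinj : Function.Injective (TensorProduct.map F1 f) := by
    obtain ⟨g, hg⟩ := f.exists_leftInverse_of_injective (LinearMap.ker_eq_bot.2 hf)
    set G := exteriorPowerMap (K := K) (m+1) g with hG
    have hGF : G.comp F1 = LinearMap.id := by
      apply LinearMap.ext
      intro y
      apply Subtype.ext
      show (G (F1 y) : ExteriorAlgebra K V) = (y : ExteriorAlgebra K V)
      rw [hG, hF1, exteriorPowerMap_coe, exteriorPowerMap_coe, ← AlgHom.comp_apply,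
        map_comp_map, hg, ExteriorAlgebra.map_id, AlgHom.id_apply]
    intro a b hab
    have h2 := congrArg (TensorProduct.map G g) hab
    rwa [← LinearMap.comp_apply, ← LinearMap.comp_apply, ← TensorProduct.map_comp, hGF, hg,
      TensorProduct.map_id, LinearMap.id_apply, LinearMap.id_apply] at h2
  -- Step 5 : assemble
  have hc : ((m+2 : ℕ) : K) ≠ 0 := Nat.cast_ne_zero.2 (by omega)
  set η : ⋀[K]^(m+2) V := (((m+2 : ℕ) : K))⁻¹ • phi (m+1) x with hη
  have hFη : F2 η = ω := by
    rw [hη, map_smul, hnat x, ← hω, hφd ω, smul_smul, inv_mul_cancel₀ hc, one_smul]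
  refine ⟨η, hinj ?_⟩
  have h3 := LinearMap.congr_fun hcomm η
  rw [LinearMap.comp_apply, LinearMap.comp_apply] at h3
  rw [h3, hFη, hω]
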